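/- Suppose d ≥ 0 with ADAᵀ positive definite, the center ȳ := (ADAᵀ)⁻¹ADr satisfies a_jᵀȳ = u_j where d_j > 0, and l̃_j satisfies l_j < l̃_j < u_j. Define μ := ((l̃_j − l_j)/(u_j − l̃_j)) d_j, d̃ := d + μ e_j, and l̃ := l + (l̃_j − l_j) e_j. Then AD̃Aᵀ is positive definite, the center of E(d̃, l̃) is again ȳ (i.e., (AD̃Aᵀ)⁻¹AD̃r̃ = ȳ, where r̃ := (u+l̃)/2 and D̃ := Diag(d̃)), and f(d̃, l̃) = f(d, l); in particular, since d̃ ≥ d with d̃_j > d_j, the move from (d,l) to (d̃,l̃) is a Pareto-improving step. -/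

import Mathlib

open Matrix

/-- `f(d,l) := rᵀDAᵀBADr - rᵀDr + vᵀDv`. -/
noncomputable def fval {n m : ℕ} (A : Matrix (Fin n) (Fin m) ℝ) (u d l : Fin m → ℝ) : ℝ :=
  let D := Matrix.diagonal d
  let r := (u + l) / 2
  let v := (u - l) / 2
  let B := (A * D * Aᵀ)⁻¹
  r ⬝ᵥ (D *ᵥ (Aᵀ *ᵥ (B *ᵥ (A *ᵥ (D *ᵥ r))))) - r ⬝ᵥ (D *ᵥ r) + v ⬝ᵥ (D *ᵥ v)

/-- Proposition 6.2 of the paper. Increasing both `d_j` and `l_j`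
while the center satisfies `a_jᵀȳ = u_j`: the new system `(d̃, l̃)` has positive definite
`AD̃Aᵀ`, the same center `ȳ`, and the same value of `f`; moreover `d̃ ≥ d` with
`d̃_j > d_j`, so the move is a Pareto-improving step. -/
theorem stmt_19 {n m : ℕ} (A : Matrix (Fin n) (Fin m) ℝ) (u l : Fin m → ℝ)
    (d : Fin m → ℝ)
    (hd : 0 ≤ d)
    (hpd : (A * Matrix.diagonal d * Aᵀ).PosDef)
    (ybar : Fin n → ℝ)
    (hybar : ybar =
      (A * Matrix.diagonal d * Aᵀ)⁻¹ *ᵥ (A *ᵥ (Matrix.diagonal d *ᵥ ((u + l) / 2))))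
    (j : Fin m) (hdj : 0 < d j)
    (hcenter : (fun k => A k j) ⬝ᵥ ybar = u j)
    (ltj : ℝ) (hlt1 : l j < ltj) (hlt2 : ltj < u j)
    (μ : ℝ) (hμ : μ = (ltj - l j) / (u j - ltj) * d j)
    (dt lt : Fin m → ℝ)
    (hdt : dt = d + μ • (Pi.single j 1 : Fin m → ℝ))
    (hlt : lt = l + (ltj - l j) • (Pi.single j 1 : Fin m → ℝ)) :
    (A * Matrix.diagonal dt * Aᵀ).PosDef ∧
    (A * Matrix.diagonal dt * Aᵀ)⁻¹ *ᵥ (A *ᵥ (Matrix.diagonal dt *ᵥ ((u + lt) / 2))) = ybar ∧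
    fval A u dt lt = fval A u d l ∧
    d ≤ dt ∧ d j < dt j := by
  have hul : 0 < u j - ltj := by linarith
  have hll : 0 < ltj - l j := by linarith
  have hμpos : 0 < μ := by
    rw [hμ]; positivity
  have hkeyμ : μ * (u j - ltj) = (ltj - l j) * d j := by
    rw [hμ]; field_simp
  have hsplit : A * Matrix.diagonal dt * Aᵀ
      = A * Matrix.diagonal d * Aᵀ
        + A * Matrix.diagonal (μ • (Pi.single j 1 : Fin m → ℝ)) * Aᵀ := by
    have hdiag : Matrix.diagonal dt
        = Matrix.diagonal d + Matrix.diagonal (μ • (Pi.single j 1 : Fin m → ℝ)) := by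
      rw [hdt]
      ext i k
      by_cases h : i = k <;> simp [Matrix.diagonal_apply, h]
    rw [hdiag, Matrix.mul_add, Matrix.add_mul]
  have hsemi : (A * Matrix.diagonal (μ • (Pi.single j 1 : Fin m → ℝ)) * Aᵀ).PosSemidef := by
    rw [← Matrix.conjTranspose_eq_transpose_of_trivial]
    refine Matrix.PosSemidef.mul_mul_conjTranspose_same ?_ A
    refine Matrix.posSemidef_diagonal_iff.mpr fun i => ?_
    by_cases h : i = j <;> simp [Pi.single_apply, h, hμpos.le]
  have hPDt : (A * Matrix.diagonal dt * Aᵀ).PosDef := by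
    rw [hsplit]; exact hpd.add_posSemidef hsemi
  have hMu : IsUnit (A * Matrix.diagonal d * Aᵀ).det := isUnit_iff_ne_zero.mpr hpd.det_pos.ne'
  have hMtu : IsUnit (A * Matrix.diagonal dt * Aᵀ).det :=
    isUnit_iff_ne_zero.mpr hPDt.det_pos.ne'
  have hMy : (A * Matrix.diagonal d * Aᵀ) *ᵥ ybar
      = A *ᵥ (Matrix.diagonal d *ᵥ ((u + l) / 2)) := by
    rw [hybar, Matrix.mulVec_mulVec, Matrix.mul_nonsing_inv _ hMu, Matrix.one_mulVec]
  have hwj : (Aᵀ *ᵥ ybar) j = u j := by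
    simpa [Matrix.mulVec, dotProduct] using hcenter
  have hDtrt : Matrix.diagonal dt *ᵥ ((u + lt) / 2)
      = Matrix.diagonal d *ᵥ ((u + l) / 2) + (μ * u j) • (Pi.single j 1 : Fin m → ℝ) := by
    funext k
    by_cases h : k = j
    · subst h
      simp [Matrix.mulVec_diagonal, hdt, hlt, Pi.single_apply]
      linear_combination (-(1:ℝ)/2) * hkeyμ
    · simp [Matrix.mulVec_diagonal, hdt, hlt, Pi.single_apply, h]
  have hE : (A * Matrix.diagonal (μ • (Pi.single j 1 : Fin m → ℝ)) * Aᵀ) *ᵥ ybar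
      = fun i => A i j * (μ * u j) := by
    rw [← Matrix.mulVec_mulVec, ← Matrix.mulVec_mulVec]
    have h1 : Matrix.diagonal (μ • (Pi.single j 1 : Fin m → ℝ)) *ᵥ (Aᵀ *ᵥ ybar)
        = Pi.single j (μ * u j) := by
      funext k
      rw [Matrix.mulVec_diagonal]
      by_cases h : k = j
      · subst h; simp [Pi.single_apply, hwj]
      · simp [Pi.single_apply, h]
    rw [h1, Matrix.mulVec_single]
    funext i
    simp only [Pi.smul_apply, op_smul_eq_mul, Matrix.col_apply]
  have hMty : (A * Matrix.diagonal dt * Aᵀ) *ᵥ ybar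
      = A *ᵥ (Matrix.diagonal dt *ᵥ ((u + lt) / 2)) := by
    rw [hsplit, Matrix.add_mulVec, hMy, hE, hDtrt, Matrix.mulVec_add, Matrix.mulVec_smul,
      Matrix.mulVec_single]
    funext i
    simp only [Pi.add_apply, Pi.smul_apply, smul_eq_mul, mul_one, op_smul_eq_mul,
      Matrix.col_apply, one_mul]
    ring
  have hc2 : (A * Matrix.diagonal dt * Aᵀ)⁻¹ *ᵥ
      (A *ᵥ (Matrix.diagonal dt *ᵥ ((u + lt) / 2))) = ybar := by
    rw [← hMty, Matrix.mulVec_mulVec, Matrix.nonsing_inv_mul _ hMtu, Matrix.one_mulVec]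
  have expand : ∀ (c x y : Fin m → ℝ),
      x ⬝ᵥ (Matrix.diagonal c *ᵥ y) = ∑ k, x k * (c k * y k) := by
    intro c x y; simp [dotProduct, Matrix.mulVec_diagonal]
  have hfe : fval A u dt lt = fval A u d l := by
    simp only [fval]
    rw [hc2, ← hybar]
    rw [expand, expand, expand, expand, expand, expand]
    rw [← Finset.sum_sub_distrib, ← Finset.sum_add_distrib,
      ← Finset.sum_sub_distrib, ← Finset.sum_add_distrib]
    refine Finset.sum_congr rfl fun k _ => ?_
    by_cases h : k = j
    · subst h
      have h2 : (Aᵀ *ᵥ ybar) k = u k := hwj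
      simp [hdt, hlt, Pi.single_apply, h2]
      linear_combination (u k / 2) * hkeyμ
    · simp [hdt, hlt, Pi.single_apply, h]
  have hle : d ≤ dt := by
    rw [hdt]; intro k
    by_cases h : k = j <;> simp [Pi.single_apply, h, hμpos.le]
  have hjlt : d j < dt j := by
    rw [hdt]; simp; linarith
  exact ⟨hPDt, hc2, hfe, hle, hjlt⟩
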